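/- If f : L → M is a surjective frame homomorphism that maps every exact meet to the meet of the images (i.e., f(⋀ᵢ xᵢ) = ⋀ᵢ f(xᵢ) whenever ⋀ᵢ xᵢ is exact), then f is exact: for every exact meet ⋀ᵢ xᵢ in L, the meet ⋀ᵢ f(xᵢ) is exact in M. -/
import Mathlib


/-- A meet (of the set `S`) is exact if it distributes over all joins. -/
def IsExactMeet {L : Type*} [Order.Frame L] (S : Set L) : Prop :=
  ∀ b : L, sInf ((· ⊔ b) '' S) = sInf S ⊔ b

/-- A surjective frame homomorphism preserving exact meets is exact: the image of every
exact meet is an exact meet. -/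
theorem stmt10 {L M : Type*} [Order.Frame L] [Order.Frame M] (f : FrameHom L M)
    (hsurj : Function.Surjective f)
    (hpres : ∀ S : Set L, IsExactMeet S → f (sInf S) = sInf (f '' S)) :
    ∀ S : Set L, IsExactMeet S → IsExactMeet (f '' S) := by
  intro S hS b
  obtain ⟨a, rfl⟩ := hsurj b
  -- S' = (· ⊔ a) '' S is an exact meet
  have hS' : IsExactMeet ((· ⊔ a) '' S) := by
    intro y
    rw [Set.image_image]
    simp only [sup_assoc]
    rw [hS (a ⊔ y), hS a, sup_assoc]
  have h1 := hpres _ hS'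
  rw [hS a] at h1
  have h2 : f (sInf S ⊔ a) = f (sInf S) ⊔ f a := map_sup f _ _
  rw [hpres S hS] at h2
  rw [h2] at h1
  rw [Set.image_image]
  rw [Set.image_image] at h1
  simp only [map_sup] at h1
  exact h1.symm
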